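/- For each positive integer k, almost every C^k function f : ℝ → ℝ (in the sense of prevalence) has the property that at each x ∈ ℝ, at most one of the derivatives f⁽⁰⁾(x), f⁽¹⁾(x), …, f⁽ᵏ⁾(x) is zero. -/

import Mathlib

open MeasureTheory Set

/-- The space `Cᵏ(ℝ)` of `k`-times continuously differentiable functions `ℝ → ℝ`,
as an additive group. -/
def Ck (k : ℕ) : AddSubgroup (ℝ → ℝ) where
  carrier := {f | ContDiff ℝ k f}
  add_mem' := fun {a b} ha hb => ContDiff.add (show ContDiff ℝ k a from ha) hb
  zero_mem' := show ContDiff ℝ k (fun _ => (0:ℝ)) from contDiff_const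
  neg_mem' := fun {a} ha => ContDiff.neg (show ContDiff ℝ k a from ha)

/-- The topology of `Cᵏ`-uniform convergence on compact sets: induced by the map
`f ↦ (f, f', …, f⁽ᵏ⁾)` into `(C(ℝ,ℝ))^{k+1}` with the compact-open topologies. -/
noncomputable instance (k : ℕ) : TopologicalSpace (Ck k) :=
  TopologicalSpace.induced
    (fun f : Ck k => fun i : Fin (k + 1) =>
      (⟨iteratedDeriv i f.1,
        (show ContDiff ℝ k f.1 from f.2).continuous_iteratedDeriv i
          (by exact_mod_cast Nat.lt_succ_iff.mp i.2)⟩ : C(ℝ, ℝ)))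
    inferInstance

/-- A subset of a topological abelian group is shy if it is contained in a Borel set
admitting a transverse measure. -/
def ShyIn {V : Type*} [TopologicalSpace V] [AddCommGroup V] (S : Set V) : Prop :=
  letI : MeasurableSpace V := borel V
  ∃ T : Set V, S ⊆ T ∧ MeasurableSet T ∧
    ∃ μ : Measure V, (∃ U : Set V, IsCompact U ∧ 0 < μ U ∧ μ U < ⊤) ∧
      ∀ v : V, μ ((fun x => x + v) '' T) = 0

/-- A set is prevalent if its complement is shy. -/
def PrevalentIn {V : Type*} [TopologicalSpace V] [AddCommGroup V] (S : Set V) : Prop :=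
  ShyIn Sᶜ

/-! ### Auxiliary material -/

open Polynomial in
lemma iteratedDeriv_polyEval (p : Polynomial ℝ) (i : ℕ) :
    iteratedDeriv i (fun x => p.eval x) = fun x => (derivative^[i] p).eval x := by
  induction i with
  | zero => simp
  | succ n ih =>
    rw [iteratedDeriv_succ, ih]
    funext x
    rw [Function.iterate_succ_apply']
    exact Polynomial.deriv _

/-- The polynomial with coefficients `c`. -/
def pfun (k : ℕ) (c : Fin (k + 1) → ℝ) : ℝ → ℝ := fun x => ∑ j, c j * x ^ (j : ℕ)

lemma contDiff_pfun (k : ℕ) (c : Fin (k + 1) → ℝ) {n : WithTop ℕ∞} :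
    ContDiff ℝ n (pfun k c) := by
  unfold pfun
  exact ContDiff.sum fun j _ => contDiff_const.mul (contDiff_id.pow _)

lemma iteratedDeriv_pfun (k : ℕ) (c : Fin (k + 1) → ℝ) (i : ℕ) :
    iteratedDeriv i (pfun k c) =
      fun x => ∑ j : Fin (k + 1),
        c j * ((j : ℕ).descFactorial i : ℝ) * x ^ ((j : ℕ) - i) := by
  have h : pfun k c = fun x =>
      (∑ j : Fin (k + 1), Polynomial.C (c j) * Polynomial.X ^ (j : ℕ)).eval x := by
    funext x
    simp [pfun, Polynomial.eval_finset_sum]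
  rw [h, iteratedDeriv_polyEval]
  funext x
  rw [Polynomial.iterate_derivative_sum]
  rw [Polynomial.eval_finset_sum]
  refine Finset.sum_congr rfl fun j _ => ?_
  rw [Polynomial.iterate_derivative_C_mul, Polynomial.iterate_derivative_X_pow_eq_natCast_mul]
  simp [mul_assoc]

lemma iteratedDeriv_pfun_zero (k : ℕ) (c : Fin (k + 1) → ℝ) (I : Fin (k + 1)) :
    iteratedDeriv I (pfun k c) 0 = c I * ((I : ℕ).factorial : ℝ) := by
  have hside : ∀ j : Fin (k + 1), j ∈ Finset.univ → j ≠ I →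
      c j * ((j : ℕ).descFactorial (I : ℕ) : ℝ) * (0 : ℝ) ^ ((j : ℕ) - (I : ℕ)) = 0 := by
    intro j _ hj
    rcases lt_or_gt_of_ne (fun h : (j : ℕ) = (I : ℕ) => hj (Fin.ext h)) with h | h
    · rw [Nat.descFactorial_eq_zero_iff_lt.2 h]; ring
    · rw [zero_pow (Nat.sub_ne_zero_of_lt h)]; ring
  have hsum : (∑ j : Fin (k + 1),
      c j * ((j : ℕ).descFactorial (I : ℕ) : ℝ) * (0 : ℝ) ^ ((j : ℕ) - (I : ℕ))) =
      c I * ((I : ℕ).descFactorial (I : ℕ) : ℝ) * (0 : ℝ) ^ ((I : ℕ) - (I : ℕ)) :=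
    Finset.sum_eq_single I hside (fun h => absurd (Finset.mem_univ I) h)
  calc iteratedDeriv I (pfun k c) 0
      = ∑ j : Fin (k + 1), c j * ((j : ℕ).descFactorial (I : ℕ) : ℝ) *
          (0 : ℝ) ^ ((j : ℕ) - (I : ℕ)) := congrFun (iteratedDeriv_pfun k c I) 0
    _ = c I * ((I : ℕ).factorial : ℝ) := by
        rw [hsum, Nat.descFactorial_self, Nat.sub_self, pow_zero, mul_one]

lemma pfun_injective (k : ℕ) : Function.Injective (pfun k) := by
  intro c c' h
  funext I
  have h1 := iteratedDeriv_pfun_zero k c I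
  have h2 := iteratedDeriv_pfun_zero k c' I
  rw [h] at h1
  have := h1.symm.trans h2
  exact mul_right_cancel₀ (Nat.cast_ne_zero.2 (Nat.factorial_ne_zero _)) this

lemma iteratedDeriv_add_apply' {i k : ℕ} (hik : i ≤ k) {f g : ℝ → ℝ}
    (hf : ContDiff ℝ k f) (hg : ContDiff ℝ k g) (x : ℝ) :
    iteratedDeriv i (f + g) x = iteratedDeriv i f x + iteratedDeriv i g x := by
  rw [← iteratedDerivWithin_univ, ← iteratedDerivWithin_univ, ← iteratedDerivWithin_univ]
  exact iteratedDerivWithin_add (Set.mem_univ x) uniqueDiffOn_univ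
    ((hf.of_le (by exact_mod_cast hik)).contDiffOn x (Set.mem_univ x))
    ((hg.of_le (by exact_mod_cast hik)).contDiffOn x (Set.mem_univ x))

/-! ### The inducing map and basic topology of `Ck` -/

/-- The inducing map used to define the topology on `Ck k`. -/
noncomputable def iotaCk (k : ℕ) : Ck k → (Fin (k + 1) → C(ℝ, ℝ)) :=
  fun f => fun i : Fin (k + 1) =>
    (⟨iteratedDeriv i f.1,
      (show ContDiff ℝ k f.1 from f.2).continuous_iteratedDeriv i
        (by exact_mod_cast Nat.lt_succ_iff.mp i.2)⟩ : C(ℝ, ℝ))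

lemma continuous_iotaCk (k : ℕ) : Continuous (iotaCk k) := continuous_induced_dom

lemma iotaCk_injective (k : ℕ) : Function.Injective (iotaCk k) := by
  intro f g h
  have h0 := congrFun h 0
  have : iteratedDeriv (0 : Fin (k + 1)) f.1 = iteratedDeriv (0 : Fin (k + 1)) g.1 :=
    congrArg DFunLike.coe h0
  simp only [Fin.val_zero, iteratedDeriv_zero] at this
  exact Subtype.ext this

instance (k : ℕ) : T2Space (Ck k) :=
  (Topology.IsEmbedding.mk (Topology.IsInducing.induced _) (iotaCk_injective k)).t2Space

/-- The probe map: coefficients to polynomial, as an element of `Ck k`. -/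
noncomputable def PhiCk (k : ℕ) (c : Fin (k + 1) → ℝ) : Ck k :=
  ⟨pfun k c, show ContDiff ℝ k (pfun k c) from contDiff_pfun k c⟩

lemma PhiCk_injective (k : ℕ) : Function.Injective (PhiCk k) := by
  intro c c' h
  exact pfun_injective k (congrArg Subtype.val h)

lemma continuous_PhiCk (k : ℕ) : Continuous (PhiCk k) := by
  rw [continuous_induced_rng]
  apply continuous_pi
  intro i
  apply ContinuousMap.continuous_of_continuous_uncurry
  show Continuous fun p : (Fin (k + 1) → ℝ) × ℝ => iteratedDeriv (i : ℕ) (pfun k p.1) p.2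
  have key : ∀ (c : Fin (k + 1) → ℝ) (x : ℝ), iteratedDeriv (i : ℕ) (pfun k c) x =
      ∑ j : Fin (k + 1), c j * ((j : ℕ).descFactorial (i : ℕ) : ℝ) * x ^ ((j : ℕ) - (i : ℕ)) :=
    fun c x => congrFun (iteratedDeriv_pfun k c i) x
  simp only [key]
  exact continuous_finset_sum _ fun j _ =>
    (((continuous_apply j).comp continuous_fst).mul continuous_const).mul (continuous_snd.pow _)

lemma continuous_add_right_Ck (k : ℕ) (v : Ck k) :
    Continuous (fun f : Ck k => f + v) := by
  rw [continuous_induced_rng]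
  apply continuous_pi
  intro i
  have h : (fun f : Ck k => iotaCk k (f + v) i) = fun f : Ck k => iotaCk k f i + iotaCk k v i := by
    funext f
    ext x
    show iteratedDeriv (i : ℕ) ((f + v) : Ck k).1 x = _
    have hcoe : ((f + v) : Ck k).1 = f.1 + v.1 := rfl
    rw [hcoe, iteratedDeriv_add_apply' (Nat.lt_succ_iff.mp i.2)
      (show ContDiff ℝ k f.1 from f.2) (show ContDiff ℝ k v.1 from v.2)]
    rfl
  show Continuous fun f : Ck k => iotaCk k (f + v) i
  rw [h]
  exact (((continuous_apply i).comp (continuous_iotaCk k)).add continuous_const)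

/-! ### The transversality core -/

lemma bad_null (k : ℕ) (i₁ i₂ : Fin (k + 1)) (h12 : (i₁ : ℕ) < (i₂ : ℕ))
    (hik : (i₂ : ℕ) ≤ k) (w : ℝ → ℝ) (hw : ContDiff ℝ k w) :
    volume {c : Fin (k + 1) → ℝ | ∃ x : ℝ,
      iteratedDeriv (i₁ : ℕ) (pfun k c + w) x = 0 ∧
      iteratedDeriv (i₂ : ℕ) (pfun k c + w) x = 0} = 0 := by
  classical
  set w₁ : ℝ → ℝ := iteratedDeriv (i₁ : ℕ) w with hw₁def
  set w₂ : ℝ → ℝ := iteratedDeriv (i₂ : ℕ) w with hw₂def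
  have hne : i₁ ≠ i₂ := Fin.ne_of_val_ne (Nat.ne_of_lt h12)
  have hfac1 : (((i₁ : ℕ).factorial : ℝ)) ≠ 0 := Nat.cast_ne_zero.2 (Nat.factorial_ne_zero _)
  have hfac2 : (((i₂ : ℕ).factorial : ℝ)) ≠ 0 := Nat.cast_ne_zero.2 (Nat.factorial_ne_zero _)
  set N : Set (Fin (k + 1) → ℝ) := {d | (∑ j : Fin (k + 1),
      d j * ((j : ℕ).descFactorial (i₂ : ℕ) : ℝ) * (d i₁) ^ ((j : ℕ) - (i₂ : ℕ))) +
      w₂ (d i₁) = 0} with hNdef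
  set H : (Fin (k + 1) → ℝ) → (Fin (k + 1) → ℝ) := fun d =>
    Function.update d i₁ ((-(w₁ (d i₁)) - ∑ j ∈ Finset.univ.erase i₁,
      d j * ((j : ℕ).descFactorial (i₁ : ℕ) : ℝ) * (d i₁) ^ ((j : ℕ) - (i₁ : ℕ))) *
      (((i₁ : ℕ).factorial : ℝ))⁻¹) with hHdef
  have e1 : ∀ (i : Fin (k + 1)) (c : Fin (k + 1) → ℝ) (y : ℝ),
      iteratedDeriv (i : ℕ) (pfun k c + w) y =
        (∑ j : Fin (k + 1), c j * ((j : ℕ).descFactorial (i : ℕ) : ℝ) *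
          y ^ ((j : ℕ) - (i : ℕ))) + iteratedDeriv (i : ℕ) w y := by
    intro i c y
    rw [iteratedDeriv_add_apply' (Nat.lt_succ_iff.mp i.2) (contDiff_pfun k c) hw,
      congrFun (iteratedDeriv_pfun k c i) y]
  -- Step 1 : the bad set is contained in `H '' N`
  have hsub : {c : Fin (k + 1) → ℝ | ∃ x : ℝ,
      iteratedDeriv (i₁ : ℕ) (pfun k c + w) x = 0 ∧
      iteratedDeriv (i₂ : ℕ) (pfun k c + w) x = 0} ⊆ H '' N := by
    rintro c ⟨x, h1, h2⟩
    rw [e1] at h1 h2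
    refine ⟨Function.update c i₁ x, ?_, ?_⟩
    · simp only [hNdef, Set.mem_setOf_eq]
      rw [Function.update_self]
      have hsum : (∑ j : Fin (k + 1), Function.update c i₁ x j *
            ((j : ℕ).descFactorial (i₂ : ℕ) : ℝ) * x ^ ((j : ℕ) - (i₂ : ℕ))) =
          ∑ j : Fin (k + 1), c j * ((j : ℕ).descFactorial (i₂ : ℕ) : ℝ) *
            x ^ ((j : ℕ) - (i₂ : ℕ)) := by
        refine Finset.sum_congr rfl fun j _ => ?_
        by_cases hj : j = i₁
        · rw [hj, Function.update_self, Nat.descFactorial_eq_zero_iff_lt.2 h12]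
          push_cast
          ring
        · rw [Function.update_of_ne hj]
      rw [hsum]
      exact h2
    · simp only [hHdef]
      funext j
      by_cases hj : j = i₁
      · rw [hj, Function.update_self, Function.update_self]
        have hsum : (∑ j ∈ Finset.univ.erase i₁, Function.update c i₁ x j *
              ((j : ℕ).descFactorial (i₁ : ℕ) : ℝ) * x ^ ((j : ℕ) - (i₁ : ℕ))) =
            ∑ j ∈ Finset.univ.erase i₁, c j * ((j : ℕ).descFactorial (i₁ : ℕ) : ℝ) *
              x ^ ((j : ℕ) - (i₁ : ℕ)) := by
          refine Finset.sum_congr rfl fun j hjmem => ?_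
          rw [Function.update_of_ne (Finset.ne_of_mem_erase hjmem)]
        rw [hsum]
        have hsplit : (∑ j ∈ Finset.univ.erase i₁, c j *
              ((j : ℕ).descFactorial (i₁ : ℕ) : ℝ) * x ^ ((j : ℕ) - (i₁ : ℕ))) +
            c i₁ * ((i₁ : ℕ).descFactorial (i₁ : ℕ) : ℝ) * x ^ ((i₁ : ℕ) - (i₁ : ℕ)) =
            ∑ j : Fin (k + 1), c j * ((j : ℕ).descFactorial (i₁ : ℕ) : ℝ) *
              x ^ ((j : ℕ) - (i₁ : ℕ)) :=
          Finset.sum_erase_add _ _ (Finset.mem_univ i₁)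
        rw [Nat.descFactorial_self, Nat.sub_self, pow_zero, mul_one] at hsplit
        have hS : (∑ j ∈ Finset.univ.erase i₁, c j *
              ((j : ℕ).descFactorial (i₁ : ℕ) : ℝ) * x ^ ((j : ℕ) - (i₁ : ℕ))) =
            -(w₁ x) - c i₁ * ((i₁ : ℕ).factorial : ℝ) := by
          linarith [hsplit, h1]
        rw [hS]
        field_simp
        ring
      · rw [Function.update_of_ne hj, Function.update_of_ne hj]
  -- Step 2 : `H` is differentiable
  have hdiffw₁ : Differentiable ℝ w₁ := by
    refine hw.differentiable_iteratedDeriv (i₁ : ℕ) ?_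
    exact_mod_cast lt_of_lt_of_le h12 hik
  have hdiff : Differentiable ℝ H := by
    have hnum : Differentiable ℝ fun d : Fin (k + 1) → ℝ =>
        (-(w₁ (d i₁)) - ∑ j ∈ Finset.univ.erase i₁,
          d j * ((j : ℕ).descFactorial (i₁ : ℕ) : ℝ) * (d i₁) ^ ((j : ℕ) - (i₁ : ℕ))) := by
      apply Differentiable.sub
      · exact (hdiffw₁.comp ((ContinuousLinearMap.proj i₁ :
          (Fin (k + 1) → ℝ) →L[ℝ] ℝ).differentiable)).neg
      · apply Differentiable.fun_sum
        intro j _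
        exact (((ContinuousLinearMap.proj j :
            (Fin (k + 1) → ℝ) →L[ℝ] ℝ).differentiable).mul_const _).mul
          (((ContinuousLinearMap.proj i₁ :
            (Fin (k + 1) → ℝ) →L[ℝ] ℝ).differentiable).pow _)
    have hval := hnum.mul_const ((((i₁ : ℕ).factorial : ℝ))⁻¹)
    rw [hHdef]
    apply differentiable_pi.2
    intro j
    by_cases hj : j = i₁
    · subst hj
      have : (fun d : Fin (k + 1) → ℝ => Function.update d j
          ((-(w₁ (d j)) - ∑ j' ∈ Finset.univ.erase j,
            d j' * ((j' : ℕ).descFactorial (j : ℕ) : ℝ) * (d j) ^ ((j' : ℕ) - (j : ℕ))) *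
            (((j : ℕ).factorial : ℝ))⁻¹) j) = fun d : Fin (k + 1) → ℝ =>
          ((-(w₁ (d j)) - ∑ j' ∈ Finset.univ.erase j,
            d j' * ((j' : ℕ).descFactorial (j : ℕ) : ℝ) * (d j) ^ ((j' : ℕ) - (j : ℕ))) *
            (((j : ℕ).factorial : ℝ))⁻¹) := by
        funext d
        rw [Function.update_self]
      rw [this]
      exact hval
    · have : (fun d : Fin (k + 1) → ℝ => Function.update d i₁
          ((-(w₁ (d i₁)) - ∑ j' ∈ Finset.univ.erase i₁,
            d j' * ((j' : ℕ).descFactorial (i₁ : ℕ) : ℝ) * (d i₁) ^ ((j' : ℕ) - (i₁ : ℕ))) *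
            (((i₁ : ℕ).factorial : ℝ))⁻¹) j) = fun d : Fin (k + 1) → ℝ => d j := by
        funext d
        rw [Function.update_of_ne hj]
      rw [this]
      exact (ContinuousLinearMap.proj j : (Fin (k + 1) → ℝ) →L[ℝ] ℝ).differentiable
  -- Step 3 : `N` is a null set
  have hNclosed : IsClosed N := by
    have hcont : Continuous fun d : Fin (k + 1) → ℝ => (∑ j : Fin (k + 1),
        d j * ((j : ℕ).descFactorial (i₂ : ℕ) : ℝ) * (d i₁) ^ ((j : ℕ) - (i₂ : ℕ))) +
        w₂ (d i₁) := by
      apply Continuous.add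
      · exact continuous_finset_sum _ fun j _ =>
          (((continuous_apply j)).mul continuous_const).mul ((continuous_apply i₁).pow _)
      · exact (hw.continuous_iteratedDeriv (i₂ : ℕ)
          (by exact_mod_cast hik)).comp (continuous_apply i₁)
    exact isClosed_eq hcont continuous_const
  have hNnull : volume N = 0 := by
    obtain ⟨m₁, hm₁⟩ := Fin.exists_succAbove_eq hne
    set e := MeasurableEquiv.piFinSuccAbove (fun _ : Fin (k + 1) => ℝ) i₂ with hedef
    have mp := (volume_preserving_piFinSuccAbove (fun _ : Fin (k + 1) => ℝ) i₂).symm e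
    have hpre : volume (e.symm ⁻¹' N) = volume N :=
      mp.measure_preimage hNclosed.measurableSet.nullMeasurableSet
    rw [← hpre]
    have hmeas' : MeasurableSet (e.symm ⁻¹' N) :=
      e.symm.measurable hNclosed.measurableSet
    rw [show (volume : Measure (ℝ × (Fin k → ℝ))) = (volume : Measure ℝ).prod volume from rfl]
    rw [Measure.prod_apply_symm hmeas']
    have hzero : ∀ z : Fin k → ℝ,
        volume ((fun y : ℝ => (y, z)) ⁻¹' (e.symm ⁻¹' N)) = 0 := by
      intro z
      apply Set.Subsingleton.measure_zero
      intro y hy y' hy'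
      have key : ∀ y0 : ℝ, ((y0, z) ∈ (e.symm ⁻¹' N)) →
          y0 * ((i₂ : ℕ).factorial : ℝ) + ((∑ m : Fin k,
            z m * (((i₂.succAbove m : Fin (k + 1)) : ℕ).descFactorial (i₂ : ℕ) : ℝ) *
            (z m₁) ^ (((i₂.succAbove m : Fin (k + 1)) : ℕ) - (i₂ : ℕ))) + w₂ (z m₁)) = 0 := by
        intro y0 hy0
        set d : Fin (k + 1) → ℝ := Fin.insertNth i₂ y0 z with hddef
        have hd : e.symm (y0, z) = d := rfl
        have hmem : (∑ j : Fin (k + 1), d j *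
            ((j : ℕ).descFactorial (i₂ : ℕ) : ℝ) * (d i₁) ^ ((j : ℕ) - (i₂ : ℕ))) +
            w₂ (d i₁) = 0 := by
          have h' := hy0
          simp only [Set.mem_preimage, hd, hNdef, Set.mem_setOf_eq] at h'
          exact h'
        have hi₁ : d i₁ = z m₁ := by
          rw [hddef, ← hm₁]
          exact Fin.insertNth_apply_succAbove (α := fun _ => ℝ) i₂ y0 z m₁
        rw [hi₁] at hmem
        rw [Fin.sum_univ_succAbove (fun j => d j *
          ((j : ℕ).descFactorial (i₂ : ℕ) : ℝ) * (z m₁) ^ ((j : ℕ) - (i₂ : ℕ))) i₂] at hmem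
        have hdi₂ : d i₂ = y0 := Fin.insertNth_apply_same (α := fun _ => ℝ) i₂ y0 z
        have hdsa : ∀ m : Fin k, d (i₂.succAbove m) = z m :=
          fun m => Fin.insertNth_apply_succAbove (α := fun _ => ℝ) i₂ y0 z m
        rw [hdi₂] at hmem
        simp only [hdsa] at hmem
        rw [Nat.descFactorial_self, Nat.sub_self, pow_zero, mul_one] at hmem
        linarith [hmem]
      have k1 := key y hy
      have k2 := key y' hy'
      have hzero2 : (y - y') * ((i₂ : ℕ).factorial : ℝ) = 0 := by linarith
      rcases mul_eq_zero.1 hzero2 with h | h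
      · linarith
      · exact absurd h hfac2
    calc (∫⁻ z, volume ((fun y : ℝ => (y, z)) ⁻¹' (e.symm ⁻¹' N)) ∂volume)
        = ∫⁻ _, 0 ∂(volume : Measure (Fin k → ℝ)) := lintegral_congr hzero
      _ = 0 := lintegral_zero
  exact measure_mono_null hsub
    (addHaar_image_eq_zero_of_differentiableOn_of_addHaar_eq_zero (μ := volume)
      hdiff.differentiableOn hNnull)

/-! ### Closed pieces of the complement -/

/-- The set of functions having a common zero of the `i₁`-th and `i₂`-th derivative
in `[-n, n]`. -/
def Cset (k : ℕ) (i₁ i₂ : Fin (k + 1)) (n : ℕ) : Set (Ck k) :=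
  {f | ∃ x ∈ Icc (-(n : ℝ)) (n : ℝ),
    iteratedDeriv (i₁ : ℕ) f.1 x = 0 ∧ iteratedDeriv (i₂ : ℕ) f.1 x = 0}

lemma isClosed_Cset (k : ℕ) (i₁ i₂ : Fin (k + 1)) (n : ℕ) :
    IsClosed (Cset k i₁ i₂ n) := by
  have himg : Cset k i₁ i₂ n = Prod.snd ''
      {p : (Icc (-(n : ℝ)) (n : ℝ)) × Ck k |
        iotaCk k p.2 i₁ (p.1 : ℝ) = 0 ∧ iotaCk k p.2 i₂ (p.1 : ℝ) = 0} := by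
    ext f
    constructor
    · rintro ⟨x, hx, h1, h2⟩
      exact ⟨(⟨x, hx⟩, f), ⟨h1, h2⟩, rfl⟩
    · rintro ⟨⟨x, g⟩, ⟨h1, h2⟩, rfl⟩
      exact ⟨(x : ℝ), x.2, h1, h2⟩
  rw [himg]
  apply isClosedMap_snd_of_compactSpace
  have h1 : Continuous fun p : (Icc (-(n : ℝ)) (n : ℝ)) × Ck k =>
      iotaCk k p.2 i₁ (p.1 : ℝ) :=
    Continuous.eval ((continuous_apply i₁).comp ((continuous_iotaCk k).comp continuous_snd))
      (continuous_subtype_val.comp continuous_fst)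
  have h2 : Continuous fun p : (Icc (-(n : ℝ)) (n : ℝ)) × Ck k =>
      iotaCk k p.2 i₂ (p.1 : ℝ) :=
    Continuous.eval ((continuous_apply i₂).comp ((continuous_iotaCk k).comp continuous_snd))
      (continuous_subtype_val.comp continuous_fst)
  exact (isClosed_eq h1 continuous_const).inter (isClosed_eq h2 continuous_const)

open Classical in
/-- Indexed pieces (empty unless `i₁ < i₂`). -/
def Dset (k : ℕ) (q : Fin (k + 1) × Fin (k + 1) × ℕ) : Set (Ck k) :=
  if ((q.1 : ℕ) < (q.2.1 : ℕ)) then Cset k q.1 q.2.1 q.2.2 else (∅ : Set (Ck k))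

lemma isClosed_Dset (k : ℕ) (q : Fin (k + 1) × Fin (k + 1) × ℕ) :
    IsClosed (Dset k q) := by
  unfold Dset
  split
  · exact isClosed_Cset _ _ _ _
  · exact isClosed_empty

/-! ### Main theorem -/

/-- For each positive integer `k`, almost every `Cᵏ` function `f : ℝ → ℝ` (in the
sense of prevalence) has the property that at each `x ∈ ℝ` at most one of
`f(x), f'(x), …, f⁽ᵏ⁾(x)` is zero. -/
theorem stmt_14 (k : ℕ) (hk : 1 ≤ k) :
    PrevalentIn {f : Ck k | ∀ x : ℝ, ∀ i₁ i₂ : ℕ, i₁ < i₂ → i₂ ≤ k →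
      iteratedDeriv i₁ f.1 x = 0 → iteratedDeriv i₂ f.1 x ≠ 0} := by
  classical
  letI : MeasurableSpace (Ck k) := borel (Ck k)
  haveI : BorelSpace (Ck k) := ⟨rfl⟩
  show ∃ T : Set (Ck k),
      {f : Ck k | ∀ x : ℝ, ∀ i₁ i₂ : ℕ, i₁ < i₂ → i₂ ≤ k →
        iteratedDeriv i₁ f.1 x = 0 → iteratedDeriv i₂ f.1 x ≠ 0}ᶜ ⊆ T ∧
      MeasurableSet T ∧
      ∃ μ : Measure (Ck k), (∃ U : Set (Ck k), IsCompact U ∧ 0 < μ U ∧ μ U < ⊤) ∧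
        ∀ v : Ck k, μ ((fun x => x + v) '' T) = 0
  set T : Set (Ck k) := ⋃ q : Fin (k + 1) × Fin (k + 1) × ℕ, Dset k q with hTdef
  have hΦmeas : Measurable (PhiCk k) := (continuous_PhiCk k).measurable
  have hUcomp : IsCompact (PhiCk k '' (Set.pi Set.univ fun _ : Fin (k + 1) => Icc (0 : ℝ) 1)) :=
    (isCompact_univ_pi fun _ => isCompact_Icc).image (continuous_PhiCk k)
  have hUmeas := hUcomp.isClosed.measurableSet
  have hUval : (Measure.map (PhiCk k) volume)
      (PhiCk k '' (Set.pi Set.univ fun _ : Fin (k + 1) => Icc (0 : ℝ) 1)) = 1 := by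
    rw [Measure.map_apply hΦmeas hUmeas, Set.preimage_image_eq _ (PhiCk_injective k),
      volume_pi_pi]
    simp [Real.volume_Icc]
  refine ⟨T, ?_, ?_, Measure.map (PhiCk k) volume, ⟨?_, ?_⟩⟩
  · -- complement is contained in T
    intro f hf
    simp only [Set.mem_compl_iff, Set.mem_setOf_eq] at hf
    push_neg at hf
    obtain ⟨x, i₁, i₂, h12, h2k, hz1, hz2⟩ := hf
    obtain ⟨n, hn⟩ := exists_nat_ge |x|
    have h1k : i₁ ≤ k := le_trans (le_of_lt h12) h2k
    refine Set.mem_iUnion.2 ⟨(⟨i₁, by omega⟩, ⟨i₂, by omega⟩, n), ?_⟩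
    have hcond : ((⟨i₁, by omega⟩ : Fin (k + 1)) : ℕ) < ((⟨i₂, by omega⟩ : Fin (k + 1)) : ℕ) :=
      h12
    show f ∈ Dset k _
    rw [show Dset k (⟨i₁, by omega⟩, ⟨i₂, by omega⟩, n) =
      Cset k ⟨i₁, by omega⟩ ⟨i₂, by omega⟩ n from if_pos hcond]
    exact ⟨x, ⟨neg_le_of_abs_le hn, le_of_abs_le hn⟩, hz1, hz2⟩
  · -- measurability
    exact MeasurableSet.iUnion fun q => (isClosed_Dset k q).measurableSet
  · -- compact set of positive finite measure
    refine ⟨PhiCk k '' (Set.pi Set.univ fun _ : Fin (k + 1) => Icc (0 : ℝ) 1),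
      hUcomp, ?_, ?_⟩
    · rw [hUval]; exact zero_lt_one
    · rw [hUval]; exact ENNReal.one_lt_top
  · -- translates are null
    intro v
    have himage : (fun x => x + v) '' T = ⋃ q, (fun x => x + v) '' Dset k q :=
      Set.image_iUnion
    rw [himage]
    refine le_antisymm (le_trans (measure_iUnion_le _) ?_) zero_le
    have hq : ∀ q : Fin (k + 1) × Fin (k + 1) × ℕ,
        (Measure.map (PhiCk k) volume) ((fun x => x + v) '' Dset k q) = 0 := by
      intro q
      by_cases hcond : ((q.1 : ℕ) < (q.2.1 : ℕ))
      · have hD : Dset k q = Cset k q.1 q.2.1 q.2.2 := if_pos hcond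
        rw [hD]
        have himg2 : (fun x => x + v) '' Cset k q.1 q.2.1 q.2.2 =
            (fun x => x + -v) ⁻¹' Cset k q.1 q.2.1 q.2.2 := Set.image_add_right
        rw [himg2]
        have hclosed : IsClosed ((fun x => x + -v) ⁻¹' Cset k q.1 q.2.1 q.2.2) :=
          (isClosed_Cset k q.1 q.2.1 q.2.2).preimage (continuous_add_right_Ck k (-v))
        rw [Measure.map_apply hΦmeas hclosed.measurableSet]
        have hw : ContDiff ℝ k ((-v : Ck k).1) := (-v).2
        refine measure_mono_null ?_ (bad_null k q.1 q.2.1 hcond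
          (Nat.lt_succ_iff.mp q.2.1.isLt) ((-v : Ck k).1) hw)
        intro c hc
        obtain ⟨x, _, h1, h2⟩ := hc
        have hcoe : ((PhiCk k c + -v : Ck k)).1 = pfun k c + ((-v : Ck k)).1 := rfl
        rw [hcoe] at h1 h2
        exact ⟨x, h1, h2⟩
      · have hD : Dset k q = (∅ : Set (Ck k)) := if_neg hcond
        rw [hD]
        simp
    calc (∑' q : Fin (k + 1) × Fin (k + 1) × ℕ,
          (Measure.map (PhiCk k) volume) ((fun x => x + v) '' Dset k q))
        = ∑' _ : Fin (k + 1) × Fin (k + 1) × ℕ, (0 : ENNReal) := tsum_congr hq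
      _ = 0 := by simp
      _ ≤ 0 := le_rfl
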